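/- Let μ > 0, γ > 0, and let ψ : [0, ∞) → ℓ² be a solution of the Salerno model. Then the deformed power is conserved: P_μ(ψ(t)) = P_μ(ψ(0)) for every t ≥ 0. -/

import Mathlib

open Set Filter Topology

noncomputable section

/-- The Hilbert space ℓ² of square-summable sequences of complex numbers indexed by ℤ. -/
abbrev l2 : Type := lp (fun _ : ℤ => ℂ) 2

/-- `ψ : I → ℓ²` is a solution of the Salerno model
`i ψ̇ₙ + (1 + μ|ψₙ|²)(ψₙ₊₁ + ψₙ₋₁) + γ|ψₙ|²ψₙ = 0` on the set `s`, with derivative curve `ψ'`: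
it is continuously differentiable and satisfies the equation componentwise. -/
def IsSalernoSol (μ γ : ℝ) (s : Set ℝ) (ψ ψ' : ℝ → l2) : Prop :=
  (∀ t ∈ s, HasDerivWithinAt ψ (ψ' t) s t) ∧ ContinuousOn ψ' s ∧
    ∀ t ∈ s, ∀ n : ℤ,
      Complex.I * (ψ' t) n
        + (1 + μ * ‖(ψ t) n‖ ^ 2 : ℝ) * ((ψ t) (n + 1) + (ψ t) (n - 1))
        + (γ * ‖(ψ t) n‖ ^ 2 : ℝ) * (ψ t) n = 0

/-- The deformed power `P_μ(ψ) = Σₙ ln(1 + μ|ψₙ|²)`. -/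
def Pdef (μ : ℝ) (ψ : l2) : ℝ := ∑' n : ℤ, Real.log (1 + μ * ‖ψ n‖ ^ 2)

namespace SalAux

lemma summable_sq (φ : l2) : Summable (fun n : ℤ => ‖φ n‖ ^ 2) := by
  have h := (lp.memℓp φ).summable (p := 2) (by norm_num)
  have e : ∀ x : ℝ, x ^ ((2:ENNReal)).toReal = x ^ 2 := by
    intro x; rw [ENNReal.toReal_ofNat]; exact Real.rpow_two x
  simpa [e] using h

lemma norm_sq_eq (φ : l2) : ‖φ‖ ^ 2 = ∑' n : ℤ, ‖φ n‖ ^ 2 := by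
  have h := lp.norm_rpow_eq_tsum (p := 2) (by norm_num) φ
  have e : ∀ x : ℝ, x ^ ((2:ENNReal)).toReal = x ^ 2 := by
    intro x; rw [ENNReal.toReal_ofNat]; exact Real.rpow_two x
  simpa [e] using h

def box (N : ℕ) : Finset ℤ := Finset.Icc (-(N:ℤ)) (N:ℤ)

lemma mem_box {N : ℕ} {n : ℤ} : n ∈ box N ↔ |n| ≤ (N:ℤ) := by
  simp [box, Finset.mem_Icc, abs_le]

def tailN (N : ℕ) (φ : l2) : ℝ := ∑' n : {n : ℤ // n ∉ box N}, ‖φ (n:ℤ)‖ ^ 2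

lemma summable_sub_box (φ : l2) (F : Finset ℤ) :
    Summable (fun n : {n : ℤ // n ∉ F} => ‖φ (n:ℤ)‖ ^ 2) :=
  (summable_sq φ).subtype _

lemma tailN_nonneg (N : ℕ) (φ : l2) : 0 ≤ tailN N φ :=
  tsum_nonneg (fun n => by positivity)

lemma tailN_eq (N : ℕ) (φ : l2) :
    tailN N φ = (∑' n : ℤ, ‖φ n‖ ^ 2) - ∑ n ∈ box N, ‖φ n‖ ^ 2 := by
  have h := (summable_sq φ).sum_add_tsum_subtype_compl (box N)
  rw [tailN, ← h]; ring

lemma tendsto_tailN (φ : l2) : Tendsto (fun N => tailN N φ) atTop (𝓝 0) := by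
  have hFin : Tendsto (fun N : ℕ => box N) atTop atTop := by
    apply tendsto_atTop_finset_of_monotone
    · intro a b hab
      exact Finset.Icc_subset_Icc (by exact_mod_cast neg_le_neg (Int.ofNat_le.2 hab))
        (by exact_mod_cast hab)
    · intro n
      exact ⟨n.natAbs, by rw [mem_box]; exact (Int.abs_eq_natAbs n).le⟩
  have h2 : Tendsto (fun N : ℕ => ∑ n ∈ box N, ‖φ n‖ ^ 2) atTop
      (𝓝 (∑' n : ℤ, ‖φ n‖ ^ 2)) := (summable_sq φ).hasSum.comp hFin
  have := (tendsto_const_nhds (x := ∑' n : ℤ, ‖φ n‖ ^ 2) (f := atTop (α := ℕ))).sub h2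
  simp only [sub_self] at this
  refine this.congr (fun N => ?_)
  rw [tailN_eq]

lemma exists_tailN_lt (φ : l2) {ε : ℝ} (hε : 0 < ε) : ∃ N, tailN N φ < ε := by
  exact ((tendsto_tailN φ).eventually_lt_const hε).exists

lemma tailN_anti (φ : l2) {M N : ℕ} (h : M ≤ N) : tailN N φ ≤ tailN M φ := by
  have hsub : {n : ℤ | n ∉ box N} ⊆ {n : ℤ | n ∉ box M} := by
    intro n hn hm
    exact hn (by rw [mem_box] at hm ⊢; omega)
  exact Summable.tsum_le_tsum_of_inj (Set.inclusion hsub) (Set.inclusion_injective hsub)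
    (fun c _ => by positivity) (fun n => le_refl _)
    (summable_sub_box φ _) (summable_sub_box φ _)

lemma tailN_le_close (N : ℕ) (φ χ : l2) :
    tailN N φ ≤ 2 * tailN N χ + 2 * ‖φ - χ‖ ^ 2 := by
  have hsub : ∀ n : ℤ, (φ - χ) n = φ n - χ n := fun n => by
    rw [lp.coeFn_sub]; rfl
  have hterm : ∀ n : {n : ℤ // n ∉ box N},
      ‖φ (n:ℤ)‖ ^ 2 ≤ 2 * ‖χ (n:ℤ)‖ ^ 2 + 2 * ‖(φ - χ) (n:ℤ)‖ ^ 2 := by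
    intro n
    have h1 : ‖φ (n:ℤ)‖ ≤ ‖χ (n:ℤ)‖ + ‖(φ - χ) (n:ℤ)‖ := by
      rw [hsub]
      calc ‖φ (n:ℤ)‖ = ‖χ (n:ℤ) + (φ (n:ℤ) - χ (n:ℤ))‖ := by ring_nf
        _ ≤ _ := norm_add_le _ _
    nlinarith [h1, norm_nonneg (φ (n:ℤ)), norm_nonneg (χ (n:ℤ)), norm_nonneg ((φ - χ) (n:ℤ)),
      sq_nonneg (‖χ (n:ℤ)‖ - ‖(φ - χ) (n:ℤ)‖), sq_nonneg (‖χ (n:ℤ)‖ + ‖(φ - χ) (n:ℤ)‖)]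
  have hs1 : Summable (fun n : {n : ℤ // n ∉ box N} =>
      2 * ‖χ (n:ℤ)‖ ^ 2 + 2 * ‖(φ - χ) (n:ℤ)‖ ^ 2) :=
    (((summable_sub_box χ _).mul_left 2).add ((summable_sub_box (φ - χ) _).mul_left 2))
  calc tailN N φ ≤ ∑' n : {n : ℤ // n ∉ box N},
        (2 * ‖χ (n:ℤ)‖ ^ 2 + 2 * ‖(φ - χ) (n:ℤ)‖ ^ 2) :=
        Summable.tsum_le_tsum hterm (summable_sub_box φ _) hs1
    _ = 2 * tailN N χ + 2 * ∑' n : {n : ℤ // n ∉ box N}, ‖(φ - χ) (n:ℤ)‖ ^ 2 := by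
        rw [Summable.tsum_add ((summable_sub_box χ _).mul_left 2) ((summable_sub_box (φ - χ) _).mul_left 2),
          tsum_mul_left, tsum_mul_left, tailN]
    _ ≤ 2 * tailN N χ + 2 * ‖φ - χ‖ ^ 2 := by
        have h := Summable.tsum_subtype_le (fun n : ℤ => ‖(φ - χ) n‖ ^ 2) {n : ℤ | n ∉ box N}
          (fun n => by positivity) (summable_sq (φ - χ))
        have h' : ∑' n : {n : ℤ // n ∉ box N}, ‖(φ - χ) (n:ℤ)‖ ^ 2
            ≤ ∑' n : ℤ, ‖(φ - χ) n‖ ^ 2 := h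
        rw [norm_sq_eq]
        linarith


lemma uniform_tail {A B : ℝ} {ψ : ℝ → l2} (hc : ContinuousOn ψ (Icc A B))
    {ε : ℝ} (hε : 0 < ε) : ∃ N : ℕ, ∀ t ∈ Icc A B, tailN N (ψ t) ≤ ε := by
  set δ : ℝ := Real.sqrt (ε / 4) with hδ
  have hδpos : 0 < δ := Real.sqrt_pos.2 (by linarith)
  have hball : ∀ t ∈ Icc A B, ∃ r > 0, ∀ s ∈ Icc A B, dist s t < r → dist (ψ s) (ψ t) < δ := by
    intro t ht
    obtain ⟨r, hr, h⟩ := Metric.continuousWithinAt_iff.1 (hc t ht) δ hδpos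
    exact ⟨r, hr, fun s hs hd => h hs hd⟩
  choose! r hr hclose using hball
  have hcov : Icc A B ⊆ ⋃ t ∈ Icc A B, Metric.ball t (r t) := by
    intro t ht
    exact Set.mem_biUnion ht (Metric.mem_ball_self (hr t ht))
  obtain ⟨I, hIsub, hIfin, hIcov⟩ :=
    (isCompact_Icc (a := A) (b := B)).elim_finite_subcover_image
      (fun t _ => Metric.isOpen_ball) hcov
  have hNt : ∀ t ∈ I, ∃ N : ℕ, tailN N (ψ t) < ε / 4 :=
    fun t _ => exists_tailN_lt (ψ t) (by linarith)
  choose! Nf hNf using hNt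
  obtain ⟨N, hN⟩ := (hIfin.image Nf).bddAbove
  refine ⟨N, fun t ht => ?_⟩
  obtain ⟨u, hu⟩ := Set.mem_iUnion.1 (hIcov ht)
  obtain ⟨huI, htu⟩ := Set.mem_iUnion.1 hu
  have huIcc : u ∈ Icc A B := hIsub huI
  have hd : dist (ψ t) (ψ u) < δ := hclose u huIcc t ht (Metric.mem_ball.1 htu)
  have h1 : tailN N (ψ u) < ε / 4 :=
    lt_of_le_of_lt (tailN_anti (ψ u) (hN (Set.mem_image_of_mem Nf huI))) (hNf u huI)
  have h2 : ‖ψ t - ψ u‖ ^ 2 < ε / 4 := by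
    have : ‖ψ t - ψ u‖ < δ := by rwa [← dist_eq_norm]
    have hnn : (0:ℝ) ≤ ‖ψ t - ψ u‖ := norm_nonneg _
    calc ‖ψ t - ψ u‖ ^ 2 < δ ^ 2 := by nlinarith
      _ = ε / 4 := Real.sq_sqrt (by linarith)
  calc tailN N (ψ t) ≤ 2 * tailN N (ψ u) + 2 * ‖ψ t - ψ u‖ ^ 2 := tailN_le_close _ _ _
    _ ≤ ε := by linarith

lemma tuo_of_tail (g : ℤ → ℝ → ℝ) (s : Set ℝ)
    (hsum : ∀ t ∈ s, Summable (fun n => |g n t|))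
    (htail : ∀ ε > 0, ∃ F₀ : Finset ℤ, ∀ F : Finset ℤ, F₀ ⊆ F → ∀ t ∈ s,
      ∑' n : {n : ℤ // n ∉ F}, |g (n:ℤ) t| ≤ ε) :
    TendstoUniformlyOn (fun (F : Finset ℤ) t => ∑ n ∈ F, g n t)
      (fun t => ∑' n, g n t) atTop s := by
  rw [Metric.tendstoUniformlyOn_iff]
  intro ε hε
  obtain ⟨F₀, hF₀⟩ := htail (ε/2) (by linarith)
  filter_upwards [Filter.eventually_ge_atTop F₀] with F hF t ht
  have hgs : Summable (fun n => g n t) := (hsum t ht).of_abs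
  have key := hgs.sum_add_tsum_subtype_compl F
  have habs : |∑' n : {n : ℤ // n ∉ F}, g (n:ℤ) t|
      ≤ ∑' n : {n : ℤ // n ∉ F}, |g (n:ℤ) t| := by
    have h2 := norm_tsum_le_tsum_norm (f := fun n : {n : ℤ // n ∉ F} => g (n:ℤ) t)
      ((hsum t ht).subtype _)
    simpa [Real.norm_eq_abs] using h2
  have htl := hF₀ F hF t ht
  rw [dist_eq_norm, Real.norm_eq_abs]
  have hrw : (∑' n, g n t) - ∑ n ∈ F, g n t = ∑' n : {n : ℤ // n ∉ F}, g (n:ℤ) t := by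
    rw [← key]; ring
  rw [hrw]
  calc |∑' n : {n : ℤ // n ∉ F}, g (n:ℤ) t| ≤ _ := habs
    _ ≤ ε/2 := htl
    _ < ε := by linarith


def evalCLM (n : ℤ) : l2 →L[ℂ] ℂ :=
  LinearMap.mkContinuous
    { toFun := fun φ => φ n
      map_add' := fun φ χ => by simp [lp.coeFn_add]
      map_smul' := fun c φ => by simp [lp.coeFn_smul] }
    1 (fun φ => by rw [one_mul]; exact lp.norm_apply_le_norm (p := 2) (by norm_num) φ n)

/-- The discrete current `J_n = Im(conj φ_n · φ_{n+1})`. -/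
def Jc (φ : l2) (n : ℤ) : ℝ := ((starRingEnd ℂ) (φ n) * φ (n + 1)).im

lemma abs_Jc_le (φ : l2) (n : ℤ) : |Jc φ n| ≤ ‖φ n‖ * ‖φ (n + 1)‖ := by
  have h1 := Complex.abs_im_le_norm ((starRingEnd ℂ) (φ n) * φ (n + 1))
  calc |Jc φ n| ≤ ‖(starRingEnd ℂ) (φ n) * φ (n + 1)‖ := h1
    _ = ‖φ n‖ * ‖φ (n + 1)‖ := by
      rw [norm_mul, Complex.norm_conj]

lemma summable_shift (φ : l2) (c : ℤ) : Summable (fun n : ℤ => ‖φ (n + c)‖ ^ 2) := by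
  have h := (Equiv.addRight c).summable_iff.mpr (summable_sq φ)
  simpa [Function.comp_def] using h

lemma summable_abs_Jc (φ : l2) : Summable (fun n : ℤ => |Jc φ n|) := by
  refine Summable.of_nonneg_of_le (fun n => abs_nonneg _)
    (fun n => (abs_Jc_le φ n).trans ?_)
    (((summable_sq φ).add (summable_shift φ 1)).div_const 2)
  have := sq_nonneg (‖φ n‖ - ‖φ (n + 1)‖)
  have h1 : (0:ℝ) ≤ ‖φ n‖ := norm_nonneg _
  have h2 : (0:ℝ) ≤ ‖φ (n + 1)‖ := norm_nonneg _
  nlinarith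

lemma summable_Jc (φ : l2) : Summable (fun n : ℤ => Jc φ n) := (summable_abs_Jc φ).of_abs

lemma tsum_g_zero (μ : ℝ) (φ : l2) :
    ∑' n : ℤ, (-(2 * μ) * (Jc φ n - Jc φ (n - 1))) = 0 := by
  have hJ : Summable (fun n : ℤ => Jc φ n) := summable_Jc φ
  have hJ' : Summable (fun n : ℤ => Jc φ (n - 1)) := by
    have h := (Equiv.subRight (1:ℤ)).summable_iff.mpr hJ
    simpa [Function.comp_def] using h
  have h1 : ∑' n : ℤ, (Jc φ n - Jc φ (n - 1)) = 0 := by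
    rw [Summable.tsum_sub hJ hJ']
    have h2 : ∑' n : ℤ, Jc φ (n - 1) = ∑' n : ℤ, Jc φ n := by
      have := (Equiv.subRight (1:ℤ)).tsum_eq (fun n => Jc φ n)
      simpa [Function.comp] using this
    rw [h2, sub_self]
  rw [tsum_mul_left, h1, mul_zero]

/-- The algebraic heart: the component equation gives the derivative identity. -/
lemma deriv_identity (μ γ : ℝ) (hμ : 0 < μ) (z w p q : ℂ)
    (heq : Complex.I * w + ((1 + μ * ‖z‖ ^ 2 : ℝ) : ℂ) * (p + q)
      + ((γ * ‖z‖ ^ 2 : ℝ) : ℂ) * z = 0) :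
    μ * (2 * (z.re * w.re + z.im * w.im)) / (1 + μ * ‖z‖ ^ 2)
      = -(2 * μ) * (((starRingEnd ℂ) z * p).im - ((starRingEnd ℂ) q * z).im) := by
  have hc : (0:ℝ) < 1 + μ * ‖z‖ ^ 2 := by positivity
  have hw : w = Complex.I * (((1 + μ * ‖z‖ ^ 2 : ℝ) : ℂ) * (p + q)
      + ((γ * ‖z‖ ^ 2 : ℝ) : ℂ) * z) := by
    linear_combination (-Complex.I) * heq + w * Complex.I_mul_I
  have hd : 2 * (z.re * w.re + z.im * w.im)
      = -2 * (1 + μ * ‖z‖ ^ 2) * (((starRingEnd ℂ) z * p).im - ((starRingEnd ℂ) q * z).im) := by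
    rw [hw]
    simp only [Complex.mul_re, Complex.mul_im, Complex.add_re, Complex.add_im,
      Complex.I_re, Complex.I_im, Complex.ofReal_re, Complex.ofReal_im,
      Complex.conj_re, Complex.conj_im]
    ring
  rw [hd]
  field_simp


lemma comp_hasDerivAt {ψ ψ' : ℝ → l2}
    (hd : ∀ t ∈ Ici (0:ℝ), HasDerivWithinAt ψ (ψ' t) (Ici 0) t)
    {t : ℝ} (ht : 0 < t) (n : ℤ) :
    HasDerivAt (fun s => (ψ s) n) ((ψ' t) n) t := by
  have h := (hd t ht.le).hasDerivAt (Ici_mem_nhds ht)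
  exact ((evalCLM n).restrictScalars ℝ).hasFDerivAt.comp_hasDerivAt t h

lemma sq_hasDerivAt {ψ ψ' : ℝ → l2}
    (hd : ∀ t ∈ Ici (0:ℝ), HasDerivWithinAt ψ (ψ' t) (Ici 0) t)
    {t : ℝ} (ht : 0 < t) (n : ℤ) :
    HasDerivAt (fun s => ‖ψ s n‖ ^ 2)
      (2 * ((ψ t n).re * (ψ' t n).re + (ψ t n).im * (ψ' t n).im)) t := by
  have hz := comp_hasDerivAt hd ht n
  have hx : HasDerivAt (fun s => ((ψ s) n).re) ((ψ' t n).re) t :=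
    Complex.reCLM.hasFDerivAt.comp_hasDerivAt t hz
  have hy : HasDerivAt (fun s => ((ψ s) n).im) ((ψ' t n).im) t :=
    Complex.imCLM.hasFDerivAt.comp_hasDerivAt t hz
  have hfun : (fun s => ‖ψ s n‖ ^ 2)
      = fun s => ((ψ s n).re * (ψ s n).re + (ψ s n).im * (ψ s n).im) := by
    funext s
    rw [Complex.sq_norm, Complex.normSq_apply]
  rw [hfun]
  have h2 := (hx.mul hx).add (hy.mul hy)
  refine h2.congr_deriv ?_
  ring

lemma L_hasDerivAt (μ : ℝ) (hμ : 0 < μ) {ψ ψ' : ℝ → l2}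
    (hd : ∀ t ∈ Ici (0:ℝ), HasDerivWithinAt ψ (ψ' t) (Ici 0) t)
    {t : ℝ} (ht : 0 < t) (n : ℤ) :
    HasDerivAt (fun s => Real.log (1 + μ * ‖ψ s n‖ ^ 2))
      (μ * (2 * ((ψ t n).re * (ψ' t n).re + (ψ t n).im * (ψ' t n).im))
        / (1 + μ * ‖ψ t n‖ ^ 2)) t := by
  have h1 := ((sq_hasDerivAt hd ht n).const_mul μ).const_add 1
  have h2 := h1.log (by positivity)
  exact h2

lemma L_hasDerivAt_g (μ γ : ℝ) (hμ : 0 < μ) {ψ ψ' : ℝ → l2}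
    (hd : ∀ t ∈ Ici (0:ℝ), HasDerivWithinAt ψ (ψ' t) (Ici 0) t)
    (heqn : ∀ t ∈ Ici (0:ℝ), ∀ n : ℤ,
      Complex.I * (ψ' t) n
        + (1 + μ * ‖(ψ t) n‖ ^ 2 : ℝ) * ((ψ t) (n + 1) + (ψ t) (n - 1))
        + (γ * ‖(ψ t) n‖ ^ 2 : ℝ) * (ψ t) n = 0)
    {t : ℝ} (ht : 0 < t) (n : ℤ) :
    HasDerivAt (fun s => Real.log (1 + μ * ‖ψ s n‖ ^ 2))
      (-(2 * μ) * (Jc (ψ t) n - Jc (ψ t) (n - 1))) t := by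
  have h := L_hasDerivAt μ hμ hd ht n
  have hid := deriv_identity μ γ hμ (ψ t n) (ψ' t n) (ψ t (n + 1)) (ψ t (n - 1)) (heqn t ht.le n)
  have hn : n - 1 + 1 = n := by ring
  have key : μ * (2 * ((ψ t n).re * (ψ' t n).re + (ψ t n).im * (ψ' t n).im))
        / (1 + μ * ‖ψ t n‖ ^ 2)
      = -(2 * μ) * (Jc (ψ t) n - Jc (ψ t) (n - 1)) := by
    rw [hid]
    simp only [Jc]
    rw [hn]
  rw [← key]
  exact h


lemma abs_g_le (μ : ℝ) (hμ : 0 < μ) (φ : l2) (n : ℤ) :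
    |(-(2 * μ) * (Jc φ n - Jc φ (n - 1)))|
      ≤ μ * (2 * ‖φ n‖ ^ 2 + ‖φ (n + 1)‖ ^ 2 + ‖φ (n - 1)‖ ^ 2) := by
  have h1 := abs_Jc_le φ n
  have h2 := abs_Jc_le φ (n - 1)
  rw [show n - 1 + 1 = n by ring] at h2
  have h3 : |Jc φ n - Jc φ (n - 1)| ≤ |Jc φ n| + |Jc φ (n - 1)| := by
    rw [sub_eq_add_neg]
    exact (abs_add_le _ _).trans (by rw [abs_neg])
  have e : |(-(2 * μ)) * (Jc φ n - Jc φ (n - 1))| = 2 * μ * |Jc φ n - Jc φ (n - 1)| := by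
    rw [abs_mul, abs_neg, abs_of_pos (by positivity : (0:ℝ) < 2 * μ)]
  have hX : |Jc φ n - Jc φ (n - 1)|
      ≤ (2 * ‖φ n‖ ^ 2 + ‖φ (n + 1)‖ ^ 2 + ‖φ (n - 1)‖ ^ 2) / 2 := by
    nlinarith [sq_nonneg (‖φ n‖ - ‖φ (n + 1)‖), sq_nonneg (‖φ n‖ - ‖φ (n - 1)‖)]
  rw [e]
  nlinarith [hμ.le, mul_le_mul_of_nonneg_left hX (by positivity : (0:ℝ) ≤ 2 * μ)]

lemma tsum_shift_le_tail (φ : l2) (N : ℕ) (F : Finset ℤ) (hF : box (N + 1) ⊆ F)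
    (c : ℤ) (hc : |c| ≤ 1) :
    ∑' n : {n : ℤ // n ∉ F}, ‖φ ((n : ℤ) + c)‖ ^ 2 ≤ tailN N φ := by
  refine Summable.tsum_le_tsum_of_inj (fun n => ⟨(n : ℤ) + c, ?_⟩)
    (fun a b hab => ?_) (fun m _ => by positivity) (fun n => le_refl _)
    ((summable_shift φ c).subtype _) (summable_sub_box φ _)
  · have hn : (n : ℤ) ∉ box (N + 1) := fun h => n.2 (hF h)
    rw [mem_box] at hn ⊢
    push_neg at hn ⊢
    have habs : |(n:ℤ)| ≤ |(n:ℤ) + c| + |c| := by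
      calc |(n:ℤ)| = |((n:ℤ) + c) + (-c)| := by ring_nf
        _ ≤ |(n:ℤ) + c| + |(-c)| := abs_add_le _ _
        _ = |(n:ℤ) + c| + |c| := by rw [abs_neg]
    omega
  · have h2 : (a : ℤ) + c = (b : ℤ) + c := congrArg Subtype.val hab
    exact Subtype.ext (by omega)

lemma tail_g_le (μ : ℝ) (hμ : 0 < μ) (φ : l2) (N : ℕ) (F : Finset ℤ)
    (hF : box (N + 1) ⊆ F) :
    ∑' n : {n : ℤ // n ∉ F}, |(-(2 * μ) * (Jc φ (n : ℤ) - Jc φ ((n : ℤ) - 1)))|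
      ≤ 4 * μ * tailN N φ := by
  have s0 : Summable (fun n : {n : ℤ // n ∉ F} => ‖φ (n : ℤ)‖ ^ 2) := summable_sub_box φ F
  have s1 : Summable (fun n : {n : ℤ // n ∉ F} => ‖φ ((n : ℤ) + 1)‖ ^ 2) :=
    (summable_shift φ 1).subtype _
  have s2 : Summable (fun n : {n : ℤ // n ∉ F} => ‖φ ((n : ℤ) - 1)‖ ^ 2) := by
    have := (summable_shift φ (-1)).subtype {n : ℤ | n ∉ F}
    simp only [sub_eq_add_neg]; exact this
  have sRHS : Summable (fun n : {n : ℤ // n ∉ F} =>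
      μ * (2 * ‖φ (n : ℤ)‖ ^ 2 + ‖φ ((n : ℤ) + 1)‖ ^ 2 + ‖φ ((n : ℤ) - 1)‖ ^ 2)) :=
    (((s0.mul_left 2).add s1).add s2).mul_left μ
  have hb : ∀ n : {n : ℤ // n ∉ F},
      |(-(2 * μ) * (Jc φ (n : ℤ) - Jc φ ((n : ℤ) - 1)))|
        ≤ μ * (2 * ‖φ (n : ℤ)‖ ^ 2 + ‖φ ((n : ℤ) + 1)‖ ^ 2 + ‖φ ((n : ℤ) - 1)‖ ^ 2) :=
    fun n => abs_g_le μ hμ φ (n : ℤ)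
  have sLHS : Summable (fun n : {n : ℤ // n ∉ F} =>
      |(-(2 * μ) * (Jc φ (n : ℤ) - Jc φ ((n : ℤ) - 1)))|) :=
    Summable.of_nonneg_of_le (fun n => abs_nonneg _) hb sRHS
  have hS0 : ∑' n : {n : ℤ // n ∉ F}, ‖φ (n : ℤ)‖ ^ 2 ≤ tailN N φ := by
    have := tsum_shift_le_tail φ N F hF 0 (by norm_num)
    simpa using this
  have hS1 : ∑' n : {n : ℤ // n ∉ F}, ‖φ ((n : ℤ) + 1)‖ ^ 2 ≤ tailN N φ :=
    tsum_shift_le_tail φ N F hF 1 (by norm_num)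
  have hS2 : ∑' n : {n : ℤ // n ∉ F}, ‖φ ((n : ℤ) - 1)‖ ^ 2 ≤ tailN N φ := by
    have := tsum_shift_le_tail φ N F hF (-1) (by norm_num)
    simpa [sub_eq_add_neg] using this
  calc ∑' n : {n : ℤ // n ∉ F}, |(-(2 * μ) * (Jc φ (n : ℤ) - Jc φ ((n : ℤ) - 1)))|
      ≤ ∑' n : {n : ℤ // n ∉ F},
        μ * (2 * ‖φ (n : ℤ)‖ ^ 2 + ‖φ ((n : ℤ) + 1)‖ ^ 2 + ‖φ ((n : ℤ) - 1)‖ ^ 2) :=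
        Summable.tsum_le_tsum hb sLHS sRHS
    _ = μ * (2 * (∑' n : {n : ℤ // n ∉ F}, ‖φ (n : ℤ)‖ ^ 2)
        + (∑' n : {n : ℤ // n ∉ F}, ‖φ ((n : ℤ) + 1)‖ ^ 2)
        + (∑' n : {n : ℤ // n ∉ F}, ‖φ ((n : ℤ) - 1)‖ ^ 2)) := by
        rw [tsum_mul_left, Summable.tsum_add ((s0.mul_left 2).add s1) s2,
          Summable.tsum_add (s0.mul_left 2) s1, tsum_mul_left]
    _ ≤ μ * (2 * tailN N φ + tailN N φ + tailN N φ) := by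
        have h0 := tailN_nonneg N φ
        gcongr
    _ = 4 * μ * tailN N φ := by ring

lemma tail_L_le (μ : ℝ) (hμ : 0 < μ) (φ : l2) (N : ℕ) (F : Finset ℤ)
    (hF : box (N + 1) ⊆ F) :
    ∑' n : {n : ℤ // n ∉ F}, |Real.log (1 + μ * ‖φ (n : ℤ)‖ ^ 2)| ≤ μ * tailN N φ := by
  have hb : ∀ n : {n : ℤ // n ∉ F},
      |Real.log (1 + μ * ‖φ (n : ℤ)‖ ^ 2)| ≤ μ * ‖φ (n : ℤ)‖ ^ 2 := by
    intro n
    rw [abs_of_nonneg (Real.log_nonneg (by nlinarith [sq_nonneg ‖φ (n : ℤ)‖]))]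
    have := Real.log_le_sub_one_of_pos
      (show (0:ℝ) < 1 + μ * ‖φ (n : ℤ)‖ ^ 2 by positivity)
    linarith
  have s0 : Summable (fun n : {n : ℤ // n ∉ F} => ‖φ (n : ℤ)‖ ^ 2) := summable_sub_box φ F
  have sLHS : Summable (fun n : {n : ℤ // n ∉ F} =>
      |Real.log (1 + μ * ‖φ (n : ℤ)‖ ^ 2)|) :=
    Summable.of_nonneg_of_le (fun n => abs_nonneg _) hb (s0.mul_left μ)
  calc ∑' n : {n : ℤ // n ∉ F}, |Real.log (1 + μ * ‖φ (n : ℤ)‖ ^ 2)|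
      ≤ ∑' n : {n : ℤ // n ∉ F}, μ * ‖φ (n : ℤ)‖ ^ 2 :=
        Summable.tsum_le_tsum hb sLHS (s0.mul_left μ)
    _ = μ * ∑' n : {n : ℤ // n ∉ F}, ‖φ (n : ℤ)‖ ^ 2 := tsum_mul_left
    _ ≤ μ * tailN N φ := by
        have := tsum_shift_le_tail φ N F hF 0 (by norm_num)
        simp only [add_zero] at this
        exact mul_le_mul_of_nonneg_left this hμ.le

lemma summable_L (μ : ℝ) (hμ : 0 < μ) (φ : l2) :
    Summable (fun n : ℤ => Real.log (1 + μ * ‖φ n‖ ^ 2)) := by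
  refine Summable.of_nonneg_of_le
    (fun n => Real.log_nonneg (by nlinarith [sq_nonneg ‖φ n‖]))
    (fun n => ?_) ((summable_sq φ).mul_left μ)
  have := Real.log_le_sub_one_of_pos (show (0:ℝ) < 1 + μ * ‖φ n‖ ^ 2 by positivity)
  linarith

lemma summable_g (μ : ℝ) (hμ : 0 < μ) (φ : l2) :
    Summable (fun n : ℤ => |(-(2 * μ) * (Jc φ n - Jc φ (n - 1)))|) := by
  have s2 : Summable (fun n : ℤ => ‖φ (n - 1)‖ ^ 2) := by
    have := summable_shift φ (-1)
    simpa [sub_eq_add_neg] using this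
  exact Summable.of_nonneg_of_le (fun n => abs_nonneg _) (fun n => abs_g_le μ hμ φ n)
    ((((summable_sq φ).mul_left 2).add (summable_shift φ 1)).add s2 |>.mul_left μ)


lemma cont_P (μ : ℝ) (hμ : 0 < μ) {ψ : ℝ → l2} {T : ℝ}
    (hc : ContinuousOn ψ (Icc 0 T)) :
    ContinuousOn (fun t => ∑' n : ℤ, Real.log (1 + μ * ‖ψ t n‖ ^ 2)) (Icc 0 T) := by
  have htuo : TendstoUniformlyOn
      (fun (F : Finset ℤ) t => ∑ n ∈ F, Real.log (1 + μ * ‖ψ t n‖ ^ 2))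
      (fun t => ∑' n : ℤ, Real.log (1 + μ * ‖ψ t n‖ ^ 2)) atTop (Icc 0 T) := by
    apply tuo_of_tail
    · exact fun t ht => (summable_L μ hμ (ψ t)).abs
    · intro ε hε
      obtain ⟨N, hN⟩ := uniform_tail hc (div_pos hε hμ)
      refine ⟨box (N + 1), fun F hF t ht => ?_⟩
      calc ∑' n : {n : ℤ // n ∉ F}, |Real.log (1 + μ * ‖ψ t (n : ℤ)‖ ^ 2)|
          ≤ μ * tailN N (ψ t) := tail_L_le μ hμ (ψ t) N F hF
        _ ≤ μ * (ε / μ) := mul_le_mul_of_nonneg_left (hN t ht) hμ.le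
        _ = ε := by field_simp
  refine htuo.continuousOn ?_
  refine Filter.Eventually.frequently ?_
  filter_upwards with F
  refine continuousOn_finset_sum F (fun n _ => ?_)
  have h1 : ContinuousOn (fun t => (ψ t) n) (Icc 0 T) :=
    (evalCLM n).continuous.comp_continuousOn hc
  refine ContinuousOn.log ?_ (fun t ht => by positivity)
  exact continuousOn_const.add (continuousOn_const.mul (h1.norm.pow 2))

lemma P_hasDerivAt_zero (μ γ : ℝ) (hμ : 0 < μ) {ψ ψ' : ℝ → l2}
    (hd : ∀ t ∈ Ici (0:ℝ), HasDerivWithinAt ψ (ψ' t) (Ici 0) t)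
    (heqn : ∀ t ∈ Ici (0:ℝ), ∀ n : ℤ,
      Complex.I * (ψ' t) n
        + (1 + μ * ‖(ψ t) n‖ ^ 2 : ℝ) * ((ψ t) (n + 1) + (ψ t) (n - 1))
        + (γ * ‖(ψ t) n‖ ^ 2 : ℝ) * (ψ t) n = 0)
    {T t : ℝ} (ht : t ∈ Ioo 0 T) :
    HasDerivAt (fun s => ∑' n : ℤ, Real.log (1 + μ * ‖ψ s n‖ ^ 2)) 0 t := by
  have hcont : ContinuousOn ψ (Icc 0 T) := fun s hs =>
    ((hd s hs.1).continuousWithinAt).mono Icc_subset_Ici_self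
  have htuo : TendstoUniformlyOn
      (fun (F : Finset ℤ) t => ∑ n ∈ F, (-(2 * μ) * (Jc (ψ t) n - Jc (ψ t) (n - 1))))
      (fun t => ∑' n : ℤ, (-(2 * μ) * (Jc (ψ t) n - Jc (ψ t) (n - 1)))) atTop (Ioo 0 T) := by
    apply tuo_of_tail
    · exact fun t ht => summable_g μ hμ (ψ t)
    · intro ε hε
      have h4μ : (0:ℝ) < 4 * μ := by positivity
      obtain ⟨N, hN⟩ := uniform_tail hcont (div_pos hε h4μ)
      refine ⟨box (N + 1), fun F hF t htI => ?_⟩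
      calc ∑' n : {n : ℤ // n ∉ F}, |(-(2 * μ) * (Jc (ψ t) (n : ℤ) - Jc (ψ t) ((n : ℤ) - 1)))|
          ≤ 4 * μ * tailN N (ψ t) := tail_g_le μ hμ (ψ t) N F hF
        _ ≤ 4 * μ * (ε / (4 * μ)) :=
          mul_le_mul_of_nonneg_left (hN t (Ioo_subset_Icc_self htI)) h4μ.le
        _ = ε := by field_simp
  have key := hasDerivAt_of_tendstoUniformlyOn isOpen_Ioo htuo
    (by
      filter_upwards with F x hx
      exact HasDerivAt.fun_sum (fun n _ => L_hasDerivAt_g μ γ hμ hd heqn hx.1 n))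
    (fun x _ => (summable_L μ hμ (ψ x)).hasSum) ht
  have h0 : ∑' n : ℤ, (-(2 * μ) * (Jc (ψ t) n - Jc (ψ t) (n - 1))) = 0 := tsum_g_zero μ (ψ t)
  rwa [h0] at key


end SalAux


/-- The deformed power `P_μ` is conserved along solutions of the Salerno model. -/
theorem Salerno_deformed_power_conserved (μ γ : ℝ) (hμ : 0 < μ) (hγ : 0 < γ)
    (ψ ψ' : ℝ → l2) (hψ : IsSalernoSol μ γ (Ici 0) ψ ψ') :
    ∀ t : ℝ, 0 ≤ t → Pdef μ (ψ t) = Pdef μ (ψ 0) := by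
  obtain ⟨hd, hcont', heqn⟩ := hψ
  intro t ht
  rcases eq_or_lt_of_le ht with h | htpos
  · rw [← h]
  set F : ℝ → ℝ := fun s => ∑' n : ℤ, Real.log (1 + μ * ‖ψ s n‖ ^ 2) with hF
  have hcontψ : ContinuousOn ψ (Icc 0 t) := fun s hs =>
    ((hd s hs.1).continuousWithinAt).mono Icc_subset_Ici_self
  have hFcont : ContinuousOn F (Icc 0 t) := SalAux.cont_P μ hμ hcontψ
  have hconst : ∀ δ, 0 < δ → δ ≤ t → F t = F δ := by
    intro δ hδ hδt
    have h := constant_of_has_deriv_right_zero (f := F) (a := δ) (b := t)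
      (hFcont.mono (Icc_subset_Icc hδ.le le_rfl))
      (fun x hx => by
        have hx1 : x ∈ Ioo 0 (t + 1) := ⟨lt_of_lt_of_le hδ hx.1, by
          rcases hx with ⟨_, hx2⟩; linarith⟩
        exact (SalAux.P_hasDerivAt_zero μ γ hμ hd heqn hx1).hasDerivWithinAt)
    exact h t (right_mem_Icc.2 hδt)
  have hne : (𝓝[Ioc 0 t] (0:ℝ)).NeBot := left_nhdsWithin_Ioc_neBot htpos
  have hlim1 : Tendsto F (𝓝[Ioc 0 t] 0) (𝓝 (F 0)) :=
    ((hFcont 0 (left_mem_Icc.2 htpos.le)).mono_left (nhdsWithin_mono 0 Ioc_subset_Icc_self))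
  have hlim2 : Tendsto F (𝓝[Ioc 0 t] 0) (𝓝 (F t)) := by
    have hev : (fun _ : ℝ => F t) =ᶠ[𝓝[Ioc 0 t] 0] F := by
      filter_upwards [self_mem_nhdsWithin] with δ hδ
      exact hconst δ hδ.1 hδ.2
    exact Tendsto.congr' hev tendsto_const_nhds
  exact tendsto_nhds_unique hlim2 hlim1
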